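/- In the LR-ending partisan subtraction game with subtraction set S = {2, 5}, the value of a single pile of n tokens is periodic in n with period 7: for n ≡ 0,1,2,3,4,5,6 (mod 7) the values are, respectively, *L, *R, {*L}, {*R}, *L, {*L, {*R}}, {*L, *R} (up to equivalence ≡). -/

import Mathlib

/-- Positions of LR-ending partisan games: two terminals and finite option sets
(represented as lists; set-like behavior is captured by the `Iso` relation). -/
inductive Pos : Type
  | termL : Pos
  | termR : Pos
  | opts : List Pos → Pos

namespace Pos

/-- Valid positions: every non-terminal position has a nonempty set of options. -/
inductive Valid : Pos → Prop
  | termL : Valid termL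
  | termR : Valid termR
  | opts : ∀ gs : List Pos, gs ≠ [] → (∀ g ∈ gs, Valid g) → Valid (opts gs)

/-- Disjunctive sum. -/
def sum : Pos → Pos → Pos
  | termL, termL => termL
  | termL, termR => termR
  | termR, termL => termR
  | termR, termR => termL
  | termL, opts hs => opts (hs.attach.map (fun h => sum termL h.1))
  | termR, opts hs => opts (hs.attach.map (fun h => sum termR h.1))
  | opts gs, termL => opts (gs.attach.map (fun g => sum g.1 termL))
  | opts gs, termR => opts (gs.attach.map (fun g => sum g.1 termR))
  | opts gs, opts hs =>
      opts (gs.attach.map (fun g => sum g.1 (opts hs)) ++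
            hs.attach.map (fun h => sum (opts gs) h.1))
termination_by g h => sizeOf g + sizeOf h
decreasing_by
  all_goals
    first
      | (have := List.sizeOf_lt_of_mem h.2; simp_all; omega)
      | (have := List.sizeOf_lt_of_mem g.2; simp_all; omega)

/-- Conjugate: swap the two kinds of terminal positions. -/
def conj : Pos → Pos
  | termL => termR
  | termR => termL
  | opts gs => opts (gs.attach.map (fun g => conj g.1))
decreasing_by
  have := List.sizeOf_lt_of_mem g.2; simp_all; omega

/-- Isomorphism of game trees (positions viewed as sets of options). -/
def Iso : Pos → Pos → Prop
  | termL, termL => True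
  | termR, termR => True
  | opts gs, opts hs =>
      (∀ g ∈ gs.attach, ∃ h ∈ hs.attach, Iso g.1 h.1) ∧
      (∀ h ∈ hs.attach, ∃ g ∈ gs.attach, Iso g.1 h.1)
  | _, _ => False
termination_by g h => sizeOf g + sizeOf h
decreasing_by
  all_goals
    (have hg := List.sizeOf_lt_of_mem g.2; have hh := List.sizeOf_lt_of_mem h.2;
     simp_all; omega)

inductive Player : Type
  | left : Player
  | right : Player
  deriving DecidableEq

/-- `Wins p b G` : player `p` has a winning strategy from position `G`,
where `b = true` means it is `p`'s turn to move and `b = false` means the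
opponent is to move.  A terminal position is won by the player given by
its label, regardless of whose turn it is. -/
inductive Wins : Player → Bool → Pos → Prop
  | termL : ∀ b, Wins Player.left b termL
  | termR : ∀ b, Wins Player.right b termR
  | move : ∀ (p : Player) (gs : List Pos) (g : Pos), g ∈ gs →
      Wins p false g → Wins p true (opts gs)
  | wait : ∀ (p : Player) (gs : List Pos),
      (∀ g, g ∈ gs → Wins p true g) → Wins p false (opts gs)

inductive Outcome : Type
  | L : Outcome
  | R : Outcome
  | N : Outcome
  | P : Outcome
  deriving DecidableEq

/-- The outcome of a position. -/
noncomputable def outcome (G : Pos) : Outcome := by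
  classical
  exact
    if Wins Player.left true G then
      if Wins Player.left false G then Outcome.L else Outcome.N
    else
      if Wins Player.left false G then Outcome.P else Outcome.R

/-- Equivalence of positions: the outcome agrees in every (valid) context. -/
def equiv (G H : Pos) : Prop :=
  ∀ X : Pos, Valid X → outcome (sum G X) = outcome (sum H X)

end Pos
namespace Pos

mutual
/-- `Ln n` is the position `*L_n`: `*L_0 = *L`, `*L_n = {*L_{n-1}, ..., *L_0}`. -/
def Ln : ℕ → Pos
  | 0 => termL
  | n + 1 => opts (LnList (n + 1))
termination_by n => 2 * n + 1
/-- `LnList n = [*L_{n-1}, ..., *L_0]`. -/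
def LnList : ℕ → List Pos
  | 0 => []
  | n + 1 => Ln n :: LnList n
termination_by n => 2 * n
end

mutual
/-- `Rn n` is the position `*R_n`. -/
def Rn : ℕ → Pos
  | 0 => termR
  | n + 1 => opts (RnList (n + 1))
termination_by n => 2 * n + 1
def RnList : ℕ → List Pos
  | 0 => []
  | n + 1 => Rn n :: RnList n
termination_by n => 2 * n
end

/-- `kome n` is `✠_n = {*L_{n-1}, *R_{n-1}, ..., *L_0, *R_0}` (for `n ≥ 1`). -/
def kome (n : ℕ) : Pos := opts (LnList n ++ RnList n)

mutual
/-- `starAux n` represents `★(n+1)`: `★1 = {*L, *R}`, `★n = {★(n-1),...,★1,*L,*R}`. -/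
def starAux : ℕ → Pos
  | 0 => opts [termL, termR]
  | n + 1 => opts (starList (n + 1) ++ [termL, termR])
termination_by n => 2 * n + 1
/-- `starList n = [★n, ..., ★1]`. -/
def starList : ℕ → List Pos
  | 0 => []
  | n + 1 => starAux n :: starList n
termination_by n => 2 * n
end

/-- `bigstar n` is `★n` (meaningful for `n ≥ 1`). -/
def bigstar (n : ℕ) : Pos := starAux (n - 1)

/-- Sum of a list of positions (`*L` is the empty sum, and `G + *L = G`). -/
def sumList (l : List Pos) : Pos := l.foldr sum termL

/-- Nim-sum (XOR) of a list of naturals. -/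
def xorList (l : List ℕ) : ℕ := l.foldr (· ^^^ ·) 0

/-- Minimum excludant of a list of naturals. -/
noncomputable def mexList (l : List ℕ) : ℕ := sInf {n : ℕ | n ∉ l}

end Pos
namespace Pos

mutual
/-- A single non-initial pile of `n` tokens in Even Nim: an arbitrary positive
even number of tokens may be removed; a pile of 0 or 1 tokens is terminal,
won by Left (even remainder) resp. Right (odd remainder). -/
def npile : ℕ → Pos
  | 0 => termL
  | 1 => termR
  | n + 2 => opts (npileList (n + 2))
termination_by n => 2 * n + 1
/-- The options of a non-initial pile of `n` tokens: `[pile (n-2), pile (n-4), ...]`. -/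
def npileList : ℕ → List Pos
  | 0 => []
  | 1 => []
  | n + 2 => npile n :: npileList n
termination_by n => 2 * n
end

/-- A single initial pile of `a` tokens in Even Nim: any positive number of
tokens may be removed on the first move. -/
def ipile (a : ℕ) : Pos :=
  if a = 0 then termL else opts ((List.range a).reverse.map npile)

/-- A single pile of `n` tokens in the LR-ending partisan subtraction game with
subtraction set `S = {2, m}` (for `m ≥ 2`): a pile of 0 or 1 tokens is terminal,
won by Left resp. Right according to the parity of the remainder. -/
def subPile (m : ℕ) (n : ℕ) : Pos :=
  if n < 2 then (if n = 0 then termL else termR)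
  else opts (subPile m (n - 2) ::
    (if 2 ≤ m ∧ m ≤ n then [subPile m (n - m)] else []))
termination_by n
decreasing_by all_goals omega

end Pos

namespace Pos

/-- The period-7 table of values for the subtraction game with `S = {2, 5}`:
for `n ≡ 0,1,2,3,4,5,6 (mod 7)` the values are
`*L, *R, {*L}, {*R}, *L, {*L,{*R}}, {*L,*R}`. -/
def table25 (r : ℕ) : Pos :=
  if r = 0 then termL
  else if r = 1 then termR
  else if r = 2 then opts [termL]
  else if r = 3 then opts [termR]
  else if r = 4 then termL
  else if r = 5 then opts [termL, opts [termR]]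
  else opts [termL, termR]

end Pos
namespace Pos

/-! ### Basic machinery -/

def Player.swap : Player → Player
  | Player.left => Player.right
  | Player.right => Player.left

def sumOptsList (gs : List Pos) : Pos → List Pos
  | termL => gs.map (fun g => sum g termL)
  | termR => gs.map (fun g => sum g termR)
  | opts xs => gs.map (fun g => sum g (opts xs)) ++ xs.map (fun x => sum (opts gs) x)

lemma sum_opts (gs : List Pos) (X : Pos) : sum (opts gs) X = opts (sumOptsList gs X) := by
  cases X <;> simp [sum, sumOptsList, List.attach_map_val]

lemma size_lt {x : Pos} {xs : List Pos} (h : x ∈ xs) : sizeOf x < sizeOf (opts xs) := by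
  have := List.sizeOf_lt_of_mem h; simp; omega

lemma pos_ind (P : Pos → Prop) (h : ∀ X, (∀ x, sizeOf x < sizeOf X → P x) → P X) :
    ∀ X, P X := by
  have key : ∀ n X, sizeOf X < n → P X := by
    intro n
    induction n with
    | zero => intro X hX; omega
    | succ n ih => intro X hX; exact h X (fun x hx => ih x (by omega))
  exact fun X => key (sizeOf X + 1) X (by omega)

lemma mem_sumOpts_left {g : Pos} {gs : List Pos} (h : g ∈ gs) (X : Pos) :
    sum g X ∈ sumOptsList gs X := by
  cases X <;> simp [sumOptsList] <;> first | exact ⟨g, h, rfl⟩ | exact Or.inl ⟨g, h, rfl⟩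

lemma mem_sumOpts_right {x : Pos} {xs : List Pos} (gs : List Pos) (h : x ∈ xs) :
    sum (opts gs) x ∈ sumOptsList gs (opts xs) := by
  simp [sumOptsList]; exact Or.inr ⟨x, h, rfl⟩

lemma sumOpts_cases {y : Pos} {gs : List Pos} {X : Pos} (h : y ∈ sumOptsList gs X) :
    (∃ g ∈ gs, y = sum g X) ∨ (∃ xs, X = opts xs ∧ ∃ x ∈ xs, y = sum (opts gs) x) := by
  cases X with
  | termL => simp [sumOptsList] at h; obtain ⟨g, hg, rfl⟩ := h; exact Or.inl ⟨g, hg, rfl⟩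
  | termR => simp [sumOptsList] at h; obtain ⟨g, hg, rfl⟩ := h; exact Or.inl ⟨g, hg, rfl⟩
  | opts xs =>
      simp [sumOptsList] at h
      rcases h with ⟨g, hg, rfl⟩ | ⟨x, hx, rfl⟩
      · exact Or.inl ⟨g, hg, rfl⟩
      · exact Or.inr ⟨xs, rfl, x, hx, rfl⟩

lemma wins_termL {p : Player} {b : Bool} : Wins p b termL ↔ p = Player.left :=
  ⟨fun h => by cases h; rfl, fun h => h ▸ Wins.termL b⟩

lemma wins_termR {p : Player} {b : Bool} : Wins p b termR ↔ p = Player.right :=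
  ⟨fun h => by cases h; rfl, fun h => h ▸ Wins.termR b⟩

lemma wins_true_iff {p : Player} {gs : List Pos} :
    Wins p true (opts gs) ↔ ∃ g ∈ gs, Wins p false g := by
  constructor
  · intro h; cases h with | move _ _ g hg hw => exact ⟨g, hg, hw⟩
  · rintro ⟨g, hg, hw⟩; exact Wins.move p gs g hg hw

lemma wins_false_iff {p : Player} {gs : List Pos} :
    Wins p false (opts gs) ↔ ∀ g ∈ gs, Wins p true g := by
  constructor
  · intro h; cases h with | wait _ _ hw => exact hw
  · exact Wins.wait p gs

/-! ### Terminal positions act simply in sums -/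

lemma winsL_id : ∀ (X : Pos) (p : Player) (b : Bool), Wins p b (sum termL X) ↔ Wins p b X := by
  apply pos_ind (P := fun X => ∀ p b, Wins p b (sum termL X) ↔ Wins p b X)
  intro X ih p b
  cases X with
  | termL => simp [sum]
  | termR => simp [sum]
  | opts xs =>
      have hsum : sum termL (opts xs) = opts (xs.map (fun x => sum termL x)) := by
        simp [sum, List.attach_map_val]
      rw [hsum]
      cases b with
      | false =>
          rw [wins_false_iff, wins_false_iff]
          constructor
          · intro h x hx
            exact (ih x (size_lt hx) p true).mp (h _ (List.mem_map_of_mem hx))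
          · intro h y hy
            obtain ⟨x, hx, rfl⟩ := List.mem_map.mp hy
            exact (ih x (size_lt hx) p true).mpr (h x hx)
      | true =>
          rw [wins_true_iff, wins_true_iff]
          constructor
          · rintro ⟨y, hy, hw⟩
            obtain ⟨x, hx, rfl⟩ := List.mem_map.mp hy
            exact ⟨x, hx, (ih x (size_lt hx) p false).mp hw⟩
          · rintro ⟨x, hx, hw⟩
            exact ⟨_, List.mem_map_of_mem hx, (ih x (size_lt hx) p false).mpr hw⟩

lemma winsR_swap : ∀ (X : Pos) (p : Player) (b : Bool),
    Wins p b (sum termR X) ↔ Wins p.swap b X := by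
  apply pos_ind (P := fun X => ∀ p b, Wins p b (sum termR X) ↔ Wins p.swap b X)
  intro X ih p b
  cases X with
  | termL =>
      have : sum termR termL = termR := by simp [sum]
      rw [this, wins_termR, wins_termL]
      cases p <;> simp [Player.swap]
  | termR =>
      have : sum termR termR = termL := by simp [sum]
      rw [this, wins_termL, wins_termR]
      cases p <;> simp [Player.swap]
  | opts xs =>
      have hsum : sum termR (opts xs) = opts (xs.map (fun x => sum termR x)) := by
        simp [sum, List.attach_map_val]
      rw [hsum]
      cases b with
      | false =>
          rw [wins_false_iff, wins_false_iff]
          constructor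
          · intro h x hx
            exact (ih x (size_lt hx) p true).mp (h _ (List.mem_map_of_mem hx))
          · intro h y hy
            obtain ⟨x, hx, rfl⟩ := List.mem_map.mp hy
            exact (ih x (size_lt hx) p true).mpr (h x hx)
      | true =>
          rw [wins_true_iff, wins_true_iff]
          constructor
          · rintro ⟨y, hy, hw⟩
            obtain ⟨x, hx, rfl⟩ := List.mem_map.mp hy
            exact ⟨x, hx, (ih x (size_lt hx) p false).mp hw⟩
          · rintro ⟨x, hx, hw⟩
            exact ⟨_, List.mem_map_of_mem hx, (ih x (size_lt hx) p false).mpr hw⟩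

/-! ### Strong equivalence -/

def SEq (G H : Pos) : Prop :=
  ∀ (X : Pos) (p : Player) (b : Bool), Wins p b (sum G X) ↔ Wins p b (sum H X)

lemma SEq.refl (G : Pos) : SEq G G := fun _ _ _ => Iff.rfl

lemma SEq.symm {G H : Pos} (h : SEq G H) : SEq H G := fun X p b => (h X p b).symm

lemma SEq.trans {G H K : Pos} (h1 : SEq G H) (h2 : SEq H K) : SEq G K :=
  fun X p b => (h1 X p b).trans (h2 X p b)

lemma seq_equiv {G H : Pos} (h : SEq G H) : equiv G H := by
  intro X _
  have h1 := h X Player.left true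
  have h2 := h X Player.left false
  unfold outcome
  split_ifs <;> tauto

/-! ### Congruence -/

lemma cong_mp (gs hs : List Pos) (h1 : ∀ g ∈ gs, ∃ h ∈ hs, SEq g h)
    (h2 : ∀ h ∈ hs, ∃ g ∈ gs, SEq g h) :
    ∀ X p b, Wins p b (sum (opts gs) X) → Wins p b (sum (opts hs) X) := by
  apply pos_ind
    (P := fun X => ∀ p b, Wins p b (sum (opts gs) X) → Wins p b (sum (opts hs) X))
  intro X ih p b hw
  cases b with
  | true =>
      rw [sum_opts, wins_true_iff] at hw ⊢
      obtain ⟨y, hy, hwy⟩ := hw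
      rcases sumOpts_cases hy with ⟨g, hg, rfl⟩ | ⟨xs, rfl, x, hx, rfl⟩
      · obtain ⟨h, hh, hseq⟩ := h1 g hg
        exact ⟨_, mem_sumOpts_left hh X, (hseq X p false).mp hwy⟩
      · exact ⟨_, mem_sumOpts_right hs hx, ih x (size_lt hx) p false hwy⟩
  | false =>
      rw [sum_opts, wins_false_iff] at hw
      rw [sum_opts, wins_false_iff]
      intro y hy
      rcases sumOpts_cases hy with ⟨h, hh, rfl⟩ | ⟨xs, rfl, x, hx, rfl⟩
      · obtain ⟨g, hg, hseq⟩ := h2 h hh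
        exact (hseq X p true).mp (hw _ (mem_sumOpts_left hg X))
      · exact ih x (size_lt hx) p true (hw _ (mem_sumOpts_right gs hx))

lemma cong (gs hs : List Pos) (h1 : ∀ g ∈ gs, ∃ h ∈ hs, SEq g h)
    (h2 : ∀ h ∈ hs, ∃ g ∈ gs, SEq g h) : SEq (opts gs) (opts hs) := by
  intro X p b
  constructor
  · exact cong_mp gs hs h1 h2 X p b
  · exact cong_mp hs gs (fun h hh => (h2 h hh).imp (fun g ⟨hg, hs⟩ => ⟨hg, hs.symm⟩))
      (fun g hg => (h1 g hg).imp (fun h ⟨hh, hs⟩ => ⟨hh, hs.symm⟩)) X p b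

/-! ### Bypassing simplifications -/

lemma sum_singL_termL : sum (opts [termL]) termL = opts [termL] := by
  rw [sum_opts]; simp [sumOptsList, sum]

lemma sum_singL_termR : sum (opts [termL]) termR = opts [termR] := by
  rw [sum_opts]; simp [sumOptsList, sum]

lemma sum_singR_termL : sum (opts [termR]) termL = opts [termR] := by
  rw [sum_opts]; simp [sumOptsList, sum]

lemma sum_singR_termR : sum (opts [termR]) termR = opts [termL] := by
  rw [sum_opts]; simp [sumOptsList, sum]

lemma wins_sing_true {p : Player} {G : Pos} : Wins p true (opts [G]) ↔ Wins p false G := by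
  rw [wins_true_iff]; simp

lemma wins_sing_false {p : Player} {G : Pos} : Wins p false (opts [G]) ↔ Wins p true G := by
  rw [wins_false_iff]; simp

lemma byL_core (gs : List Pos) (hmem : opts [termL] ∈ gs)
    (hall : ∀ g ∈ gs, ∃ os, g = opts os ∧ termL ∈ os) :
    ∀ X p b, Wins p b (sum (opts gs) X) ↔ Wins p b X := by
  apply pos_ind (P := fun X => ∀ p b, Wins p b (sum (opts gs) X) ↔ Wins p b X)
  intro X ih p b
  rw [sum_opts]
  constructor
  · intro h
    cases b with
    | true =>
        rw [wins_true_iff] at h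
        obtain ⟨y, hy, hw⟩ := h
        rcases sumOpts_cases hy with ⟨g, hg, rfl⟩ | ⟨xs, rfl, x, hx, rfl⟩
        · obtain ⟨os, rfl, hL⟩ := hall g hg
          rw [sum_opts, wins_false_iff] at hw
          have := hw _ (mem_sumOpts_left hL X)
          exact (winsL_id X p true).mp this
        · exact Wins.move p xs x hx ((ih x (size_lt hx) p false).mp hw)
    | false =>
        rw [wins_false_iff] at h
        cases X with
        | termL =>
            have h1 := h _ (mem_sumOpts_left hmem termL)
            rw [sum_singL_termL, wins_sing_true, wins_termL] at h1
            rw [wins_termL]; exact h1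
        | termR =>
            have h1 := h _ (mem_sumOpts_left hmem termR)
            rw [sum_singL_termR, wins_sing_true, wins_termR] at h1
            rw [wins_termR]; exact h1
        | opts xs =>
            apply Wins.wait
            intro x hx
            exact (ih x (size_lt hx) p true).mp (h _ (mem_sumOpts_right gs hx))
  · intro h
    cases b with
    | true =>
        cases X with
        | termL =>
            rw [wins_termL] at h; subst h
            apply Wins.move _ _ _ (mem_sumOpts_left hmem termL)
            rw [sum_singL_termL, wins_sing_false, wins_termL]
        | termR =>
            rw [wins_termR] at h; subst h
            apply Wins.move _ _ _ (mem_sumOpts_left hmem termR)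
            rw [sum_singL_termR, wins_sing_false, wins_termR]
        | opts xs =>
            rw [wins_true_iff] at h
            obtain ⟨x, hx, hw⟩ := h
            exact Wins.move _ _ _ (mem_sumOpts_right gs hx)
              ((ih x (size_lt hx) p false).mpr hw)
    | false =>
        apply Wins.wait
        intro y hy
        rcases sumOpts_cases hy with ⟨g, hg, rfl⟩ | ⟨xs, hXeq, x, hx, rfl⟩
        · obtain ⟨os, rfl, hL⟩ := hall g hg
          rw [sum_opts]
          exact Wins.move _ _ _ (mem_sumOpts_left hL X) ((winsL_id X p false).mpr h)
        · subst hXeq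
          rw [wins_false_iff] at h
          exact (ih x (size_lt hx) p true).mpr (h x hx)

lemma byR_core (gs : List Pos) (hmem : opts [termR] ∈ gs)
    (hall : ∀ g ∈ gs, ∃ os, g = opts os ∧ termR ∈ os) :
    ∀ X p b, Wins p b (sum (opts gs) X) ↔ Wins p.swap b X := by
  apply pos_ind (P := fun X => ∀ p b, Wins p b (sum (opts gs) X) ↔ Wins p.swap b X)
  intro X ih p b
  rw [sum_opts]
  constructor
  · intro h
    cases b with
    | true =>
        rw [wins_true_iff] at h
        obtain ⟨y, hy, hw⟩ := h
        rcases sumOpts_cases hy with ⟨g, hg, rfl⟩ | ⟨xs, rfl, x, hx, rfl⟩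
        · obtain ⟨os, rfl, hR⟩ := hall g hg
          rw [sum_opts, wins_false_iff] at hw
          have := hw _ (mem_sumOpts_left hR X)
          exact (winsR_swap X p true).mp this
        · exact Wins.move _ xs x hx ((ih x (size_lt hx) p false).mp hw)
    | false =>
        rw [wins_false_iff] at h
        cases X with
        | termL =>
            have h1 := h _ (mem_sumOpts_left hmem termL)
            rw [sum_singR_termL, wins_sing_true, wins_termR] at h1
            rw [wins_termL]; subst h1; rfl
        | termR =>
            have h1 := h _ (mem_sumOpts_left hmem termR)
            rw [sum_singR_termR, wins_sing_true, wins_termL] at h1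
            rw [wins_termR]; subst h1; rfl
        | opts xs =>
            apply Wins.wait
            intro x hx
            exact (ih x (size_lt hx) p true).mp (h _ (mem_sumOpts_right gs hx))
  · intro h
    cases b with
    | true =>
        cases X with
        | termL =>
            rw [wins_termL] at h
            have hp : p = Player.right := by cases p <;> simp [Player.swap] at h ⊢
            subst hp
            apply Wins.move _ _ _ (mem_sumOpts_left hmem termL)
            rw [sum_singR_termL, wins_sing_false, wins_termR]
        | termR =>
            rw [wins_termR] at h
            have hp : p = Player.left := by cases p <;> simp [Player.swap] at h ⊢
            subst hp
            apply Wins.move _ _ _ (mem_sumOpts_left hmem termR)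
            rw [sum_singR_termR, wins_sing_false, wins_termL]
        | opts xs =>
            rw [wins_true_iff] at h
            obtain ⟨x, hx, hw⟩ := h
            exact Wins.move _ _ _ (mem_sumOpts_right gs hx)
              ((ih x (size_lt hx) p false).mpr hw)
    | false =>
        apply Wins.wait
        intro y hy
        rcases sumOpts_cases hy with ⟨g, hg, rfl⟩ | ⟨xs, hXeq, x, hx, rfl⟩
        · obtain ⟨os, rfl, hR⟩ := hall g hg
          rw [sum_opts]
          exact Wins.move _ _ _ (mem_sumOpts_left hR X) ((winsR_swap X p false).mpr h)
        · subst hXeq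
          rw [wins_false_iff] at h
          exact (ih x (size_lt hx) p true).mpr (h x hx)

lemma byL (gs : List Pos) (hmem : opts [termL] ∈ gs)
    (hall : ∀ g ∈ gs, ∃ os, g = opts os ∧ termL ∈ os) : SEq (opts gs) termL :=
  fun X p b => (byL_core gs hmem hall X p b).trans (winsL_id X p b).symm

lemma byR (gs : List Pos) (hmem : opts [termR] ∈ gs)
    (hall : ∀ g ∈ gs, ∃ os, g = opts os ∧ termR ∈ os) : SEq (opts gs) termR :=
  fun X p b => (byR_core gs hmem hall X p b).trans (winsR_swap X p b).symm

/-! ### Reversibility (domination) -/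

lemma rev (ds rest : List Pos) (hmem : opts rest ∈ ds) :
    SEq (opts (opts ds :: rest)) (opts rest) := by
  intro X
  apply pos_ind (P := fun X => ∀ p b,
    Wins p b (sum (opts (opts ds :: rest)) X) ↔ Wins p b (sum (opts rest) X))
  intro X ih p b
  rw [sum_opts, sum_opts]
  constructor
  · intro h
    cases b with
    | true =>
        rw [wins_true_iff] at h ⊢
        obtain ⟨y, hy, hw⟩ := h
        rcases sumOpts_cases hy with ⟨g, hg, rfl⟩ | ⟨xs, rfl, x, hx, rfl⟩
        · rcases List.mem_cons.mp hg with rfl | hg'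
          · rw [sum_opts, wins_false_iff] at hw
            have := hw _ (mem_sumOpts_left hmem X)
            rw [sum_opts, wins_true_iff] at this
            exact this
          · exact ⟨_, mem_sumOpts_left hg' X, hw⟩
        · exact ⟨_, mem_sumOpts_right rest hx, (ih x (size_lt hx) p false).mp hw⟩
    | false =>
        rw [wins_false_iff] at h ⊢
        intro y hy
        rcases sumOpts_cases hy with ⟨g, hg, rfl⟩ | ⟨xs, rfl, x, hx, rfl⟩
        · exact h _ (mem_sumOpts_left (List.mem_cons_of_mem _ hg) X)
        · exact (ih x (size_lt hx) p true).mp (h _ (mem_sumOpts_right (opts ds :: rest) hx))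
  · intro h
    cases b with
    | true =>
        rw [wins_true_iff] at h ⊢
        obtain ⟨y, hy, hw⟩ := h
        rcases sumOpts_cases hy with ⟨g, hg, rfl⟩ | ⟨xs, rfl, x, hx, rfl⟩
        · exact ⟨_, mem_sumOpts_left (List.mem_cons_of_mem _ hg) X, hw⟩
        · exact ⟨_, mem_sumOpts_right (opts ds :: rest) hx, (ih x (size_lt hx) p false).mpr hw⟩
    | false =>
        rw [wins_false_iff] at h ⊢
        intro y hy
        rcases sumOpts_cases hy with ⟨g, hg, rfl⟩ | ⟨xs, rfl, x, hx, rfl⟩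
        · rcases List.mem_cons.mp hg with rfl | hg'
          · rw [sum_opts, wins_true_iff]
            refine ⟨_, mem_sumOpts_left hmem X, ?_⟩
            rw [sum_opts, wins_false_iff]
            exact h
          · exact h _ (mem_sumOpts_left hg' X)
        · exact (ih x (size_lt hx) p true).mpr (h _ (mem_sumOpts_right rest hx))

/-! ### Computation lemmas -/

lemma sp0 : subPile 5 0 = termL := by rw [subPile]; norm_num
lemma sp1 : subPile 5 1 = termR := by rw [subPile]; norm_num
lemma sp2 : subPile 5 2 = opts [termL] := by rw [subPile]; norm_num [sp0]
lemma sp3 : subPile 5 3 = opts [termR] := by rw [subPile]; norm_num [sp1]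
lemma sp4 : subPile 5 4 = opts [opts [termL]] := by rw [subPile]; norm_num [sp2]

lemma spge5 (n : ℕ) (h : 5 ≤ n) :
    subPile 5 n = opts [subPile 5 (n-2), subPile 5 (n-5)] := by
  rw [subPile]
  have h1 : ¬ n < 2 := by omega
  simp [h1, h]

lemma t0 : table25 0 = termL := by norm_num [table25]
lemma t1 : table25 1 = termR := by norm_num [table25]
lemma t2 : table25 2 = opts [termL] := by norm_num [table25]
lemma t3 : table25 3 = opts [termR] := by norm_num [table25]
lemma t4 : table25 4 = termL := by norm_num [table25]
lemma t5 : table25 5 = opts [termL, opts [termR]] := by norm_num [table25]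
lemma t6 : table25 6 = opts [termL, termR] := by norm_num [table25]

/-! ### The seven-case step -/

lemma step (r : ℕ) (hr : r < 7) :
    SEq (opts [table25 ((r+5)%7), table25 ((r+2)%7)]) (table25 r) := by
  interval_cases r
  · -- r = 0
    rw [(by norm_num : (0+5)%7 = 5), (by norm_num : (0+2)%7 = 2), t5, t2, t0]
    refine byL _ (by simp) ?_
    intro g hg
    simp only [List.mem_cons, List.not_mem_nil, or_false] at hg
    rcases hg with rfl | rfl
    · exact ⟨[termL, opts [termR]], rfl, by simp⟩
    · exact ⟨[termL], rfl, by simp⟩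
  · -- r = 1
    rw [(by norm_num : (1+5)%7 = 6), (by norm_num : (1+2)%7 = 3), t6, t3, t1]
    refine byR _ (by simp) ?_
    intro g hg
    simp only [List.mem_cons, List.not_mem_nil, or_false] at hg
    rcases hg with rfl | rfl
    · exact ⟨[termL, termR], rfl, by simp⟩
    · exact ⟨[termR], rfl, by simp⟩
  · -- r = 2
    rw [(by norm_num : (2+5)%7 = 0), (by norm_num : (2+2)%7 = 4), t0, t4, t2]
    refine cong _ _ ?_ ?_
    · intro g hg
      simp only [List.mem_cons, List.not_mem_nil, or_false] at hg
      rcases hg with rfl | rfl <;> exact ⟨termL, by simp, SEq.refl _⟩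
    · intro h hh
      simp only [List.mem_cons, List.not_mem_nil, or_false] at hh
      subst hh
      exact ⟨termL, by simp, SEq.refl _⟩
  · -- r = 3
    rw [(by norm_num : (3+5)%7 = 1), (by norm_num : (3+2)%7 = 5), t1, t5, t3]
    refine SEq.trans (cong _ [opts [termL, opts [termR]], termR] ?_ ?_)
      (rev [termL, opts [termR]] [termR] (by simp))
    · intro g hg
      simp only [List.mem_cons, List.not_mem_nil, or_false] at hg
      rcases hg with rfl | rfl
      · exact ⟨termR, by simp, SEq.refl _⟩
      · exact ⟨opts [termL, opts [termR]], by simp, SEq.refl _⟩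
    · intro h hh
      simp only [List.mem_cons, List.not_mem_nil, or_false] at hh
      rcases hh with rfl | rfl
      · exact ⟨opts [termL, opts [termR]], by simp, SEq.refl _⟩
      · exact ⟨termR, by simp, SEq.refl _⟩
  · -- r = 4
    rw [(by norm_num : (4+5)%7 = 2), (by norm_num : (4+2)%7 = 6), t2, t6, t4]
    refine byL _ (by simp) ?_
    intro g hg
    simp only [List.mem_cons, List.not_mem_nil, or_false] at hg
    rcases hg with rfl | rfl
    · exact ⟨[termL], rfl, by simp⟩
    · exact ⟨[termL, termR], rfl, by simp⟩
  · -- r = 5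
    rw [(by norm_num : (5+5)%7 = 3), (by norm_num : (5+2)%7 = 0), t3, t0, t5]
    refine cong _ _ ?_ ?_
    · intro g hg
      simp only [List.mem_cons, List.not_mem_nil, or_false] at hg
      rcases hg with rfl | rfl
      · exact ⟨opts [termR], by simp, SEq.refl _⟩
      · exact ⟨termL, by simp, SEq.refl _⟩
    · intro h hh
      simp only [List.mem_cons, List.not_mem_nil, or_false] at hh
      rcases hh with rfl | rfl
      · exact ⟨termL, by simp, SEq.refl _⟩
      · exact ⟨opts [termR], by simp, SEq.refl _⟩
  · -- r = 6
    rw [(by norm_num : (6+5)%7 = 4), (by norm_num : (6+2)%7 = 1), t4, t1, t6]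
    exact SEq.refl _

/-! ### Main induction -/

lemma main : ∀ n, SEq (subPile 5 n) (table25 (n % 7)) := by
  intro n
  induction n using Nat.strong_induction_on with
  | _ n ih =>
    rcases lt_or_ge n 5 with h | h
    · interval_cases n
      · rw [sp0, (by norm_num : (0:ℕ) % 7 = 0), t0]; exact SEq.refl _
      · rw [sp1, (by norm_num : (1:ℕ) % 7 = 1), t1]; exact SEq.refl _
      · rw [sp2, (by norm_num : (2:ℕ) % 7 = 2), t2]; exact SEq.refl _
      · rw [sp3, (by norm_num : (3:ℕ) % 7 = 3), t3]; exact SEq.refl _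
      · rw [sp4, (by norm_num : (4:ℕ) % 7 = 4), t4]
        refine byL _ (by simp) ?_
        intro g hg
        simp only [List.mem_cons, List.not_mem_nil, or_false] at hg
        subst hg
        exact ⟨[termL], rfl, by simp⟩
    · rw [spge5 n h]
      have e2 : (n-2) % 7 = (n%7+5)%7 := by omega
      have e5 : (n-5) % 7 = (n%7+2)%7 := by omega
      have ih2 := ih (n-2) (by omega)
      have ih5 := ih (n-5) (by omega)
      rw [e2] at ih2
      rw [e5] at ih5
      refine SEq.trans
        (cong _ [table25 ((n%7+5)%7), table25 ((n%7+2)%7)] ?_ ?_)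
        (step (n%7) (Nat.mod_lt _ (by norm_num)))
      · intro g hg
        simp only [List.mem_cons, List.not_mem_nil, or_false] at hg
        rcases hg with rfl | rfl
        · exact ⟨_, by simp, ih2⟩
        · exact ⟨_, by simp, ih5⟩
      · intro g hg
        simp only [List.mem_cons, List.not_mem_nil, or_false] at hg
        rcases hg with rfl | rfl
        · exact ⟨_, by simp, ih2⟩
        · exact ⟨_, by simp, ih5⟩

end Pos
/-- in the LR-ending partisan subtraction game with `S = {2, 5}`,
the value of a pile of `n` tokens is periodic in `n` with period 7, given by the
table `*L, *R, {*L}, {*R}, *L, {*L,{*R}}, {*L,*R}` (up to equivalence). -/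
theorem subtraction_2_5 (n : ℕ) :
    Pos.equiv (Pos.subPile 5 n) (Pos.table25 (n % 7)) := Pos.seq_equiv (Pos.main n)
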